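/- Let R_1, …, R_n (n ≥ 3) be a rectangular floorplan of a rectangle R = [A,B] × [C,D], and let G be its adjacency graph on {1, …, n}. If the vertex i is a cut vertex of G (i.e., G is connected but the induced subgraph of G on {1,…,n} \ {i} is disconnected), then the rectangle R_i spans the full width or the full height of R; that is, either a_i = A and b_i = B, or c_i = C and d_i = D. -/

import Mathlib

open Set

/-- The closed axis-aligned rectangle `[a,b] × [c,d]` in the plane. -/
def Rect (a b c d : ℝ) : Set (ℝ × ℝ) := Set.Icc a b ×ˢ Set.Icc c d

/-- `IsRFP A B C D a b c d` says that the family of rectangles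
`[a k, b k] × [c k, d k]` is a rectangular floorplan of `[A,B] × [C,D]`:
each member is a nondegenerate rectangle, their union is the big rectangle,
their (open) interiors are pairwise disjoint, and no point lies in four of them. -/
def IsRFP {ι : Type*} [Fintype ι] (A B C D : ℝ) (a b c d : ι → ℝ) : Prop :=
  A < B ∧ C < D ∧
  (∀ k, a k < b k ∧ c k < d k) ∧
  (⋃ k, Rect (a k) (b k) (c k) (d k)) = Rect A B C D ∧
  ((Set.univ : Set ι).Pairwise fun i j =>
    Disjoint (Set.Ioo (a i) (b i) ×ˢ Set.Ioo (c i) (d i))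
             (Set.Ioo (a j) (b j) ×ˢ Set.Ioo (c j) (d j))) ∧
  (∀ p : ℝ × ℝ, {k : ι | p ∈ Rect (a k) (b k) (c k) (d k)}.ncard ≤ 3)

/-- The adjacency graph of a family of rectangles: `i ~ j` iff `i ≠ j` and
the intersection of the two rectangles contains more than one point. -/
def adjGraph {ι : Type*} (a b c d : ι → ℝ) : SimpleGraph ι :=
  SimpleGraph.fromRel fun i j =>
    (Rect (a i) (b i) (c i) (d i) ∩ Rect (a j) (b j) (c j) (d j)).Nontrivial


lemma mem_Rect {a b c d : ℝ} {p : ℝ × ℝ} :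
    p ∈ Rect a b c d ↔ a ≤ p.1 ∧ p.1 ≤ b ∧ c ≤ p.2 ∧ p.2 ≤ d := by
  simp [Rect, Set.mem_prod, Set.mem_Icc, Prod.le_def, and_assoc]
  tauto

lemma Rect_closed (a b c d : ℝ) : IsClosed (Rect a b c d) := isClosed_Icc.prod isClosed_Icc

lemma joinedIn_of_segment {s : Set (ℝ × ℝ)} {p q : ℝ × ℝ} (h : segment ℝ p q ⊆ s) :
    JoinedIn s p q :=
  ((convex_segment p q).isPathConnected ⟨p, left_mem_segment ℝ p q⟩ |>.joinedIn p
    (left_mem_segment ℝ p q) q (right_mem_segment ℝ p q)).mono h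

lemma segment_vert {s : Set (ℝ × ℝ)} {x y1 y2 : ℝ}
    (h : ∀ y, min y1 y2 ≤ y → y ≤ max y1 y2 → (x, y) ∈ s) :
    JoinedIn s (x, y1) (x, y2) := by
  apply joinedIn_of_segment
  rintro z ⟨t1, t2, ht1, ht2, hsum, rfl⟩
  have ht : t1 = 1 - t2 := by linarith
  subst ht
  have hx : (1 - t2) * x + t2 * x = x := by ring
  have h1 : min y1 y2 ≤ (1 - t2) * y1 + t2 * y2 := by
    rcases le_total y1 y2 with hy | hy
    · rw [min_eq_left hy]; nlinarith [mul_nonneg ht2 (sub_nonneg.2 hy)]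
    · rw [min_eq_right hy]; nlinarith [mul_nonneg (by linarith : (0:ℝ) ≤ 1 - t2) (sub_nonneg.2 hy)]
  have h2 : (1 - t2) * y1 + t2 * y2 ≤ max y1 y2 := by
    rcases le_total y1 y2 with hy | hy
    · rw [max_eq_right hy]; nlinarith [mul_nonneg (by linarith : (0:ℝ) ≤ 1 - t2) (sub_nonneg.2 hy)]
    · rw [max_eq_left hy]; nlinarith [mul_nonneg ht2 (sub_nonneg.2 hy)]
  have heq : ((1 - t2) • ((x, y1) : ℝ × ℝ) + t2 • ((x, y2) : ℝ × ℝ)) = (x, (1 - t2) * y1 + t2 * y2) := by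
    simp [Prod.ext_iff, smul_eq_mul, hx]
  rw [heq]
  exact h _ h1 h2

lemma segment_horiz {s : Set (ℝ × ℝ)} {y x1 x2 : ℝ}
    (h : ∀ x, min x1 x2 ≤ x → x ≤ max x1 x2 → (x, y) ∈ s) :
    JoinedIn s (x1, y) (x2, y) := by
  apply joinedIn_of_segment
  rintro z ⟨t1, t2, ht1, ht2, hsum, rfl⟩
  have ht : t1 = 1 - t2 := by linarith
  subst ht
  have hy : (1 - t2) * y + t2 * y = y := by ring
  have h1 : min x1 x2 ≤ (1 - t2) * x1 + t2 * x2 := by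
    rcases le_total x1 x2 with hx | hx
    · rw [min_eq_left hx]; nlinarith [mul_nonneg ht2 (sub_nonneg.2 hx)]
    · rw [min_eq_right hx]; nlinarith [mul_nonneg (by linarith : (0:ℝ) ≤ 1 - t2) (sub_nonneg.2 hx)]
  have h2 : (1 - t2) * x1 + t2 * x2 ≤ max x1 x2 := by
    rcases le_total x1 x2 with hx | hx
    · rw [max_eq_right hx]; nlinarith [mul_nonneg (by linarith : (0:ℝ) ≤ 1 - t2) (sub_nonneg.2 hx)]
    · rw [max_eq_left hx]; nlinarith [mul_nonneg ht2 (sub_nonneg.2 hx)]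
  have heq : ((1 - t2) • ((x1, y) : ℝ × ℝ) + t2 • ((x2, y) : ℝ × ℝ)) = ((1 - t2) * x1 + t2 * x2, y) := by
    simp [Prod.ext_iff, smul_eq_mul, hy]
  rw [heq]
  exact h _ h1 h2

lemma rect_sub {n : ℕ} {A B C D : ℝ} {a b c d : Fin n → ℝ}
    (hnd : ∀ k, a k < b k ∧ c k < d k)
    (hcov : (⋃ k, Rect (a k) (b k) (c k) (d k)) = Rect A B C D) (m : Fin n) :
    A ≤ a m ∧ b m ≤ B ∧ C ≤ c m ∧ d m ≤ D := by
  have hsub : Rect (a m) (b m) (c m) (d m) ⊆ Rect A B C D := by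
    rw [← hcov]
    exact Set.subset_iUnion (fun k => Rect (a k) (b k) (c k) (d k)) m
  have hmem1 : ((a m, c m) : ℝ × ℝ) ∈ Rect (a m) (b m) (c m) (d m) :=
    mem_Rect.2 ⟨le_refl _, (hnd m).1.le, le_refl _, (hnd m).2.le⟩
  have hmem2 : ((b m, d m) : ℝ × ℝ) ∈ Rect (a m) (b m) (c m) (d m) :=
    mem_Rect.2 ⟨(hnd m).1.le, le_refl _, (hnd m).2.le, le_refl _⟩
  have h1 := mem_Rect.1 (hsub hmem1)
  have h2 := mem_Rect.1 (hsub hmem2)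
  exact ⟨h1.1, h2.2.1, h1.2.2.1, h2.2.2.2⟩

lemma dist_corner (x y s t e : ℝ) (hs : |s| ≤ 1) (ht : |t| ≤ 1) (he : 0 ≤ e) :
    dist ((x, y) : ℝ × ℝ) (x + s * e, y + t * e) ≤ e := by
  rw [Prod.dist_eq]
  have h1 : dist x (x + s * e) ≤ e := by
    rw [Real.dist_eq]
    have hh : x - (x + s * e) = -(s * e) := by ring
    rw [hh, abs_neg, abs_mul, abs_of_nonneg he]
    nlinarith [abs_nonneg s]
  have h2 : dist y (y + t * e) ≤ e := by
    rw [Real.dist_eq]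
    have hh : y - (y + t * e) = -(t * e) := by ring
    rw [hh, abs_neg, abs_mul, abs_of_nonneg he]
    nlinarith [abs_nonneg t]
  exact max_le h1 h2

/-- There is a small radius `ε'` around an interior point `(x0,y0)` such that any point
of the plane within distance `ε'` lies in some rectangle of the family that also
contains `(x0,y0)` itself. -/
lemma probe {n : ℕ} {A B C D : ℝ} {a b c d : Fin n → ℝ} (m0 : Fin n)
    (hnd : ∀ k, a k < b k ∧ c k < d k)
    (hcov : (⋃ k, Rect (a k) (b k) (c k) (d k)) = Rect A B C D)
    {x0 y0 : ℝ} (hAx : A < x0) (hxB : x0 < B) (hCy : C < y0) (hyD : y0 < D) :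
    ∃ ε' : ℝ, 0 < ε' ∧ ε' < x0 - A ∧ ε' < B - x0 ∧ ε' < y0 - C ∧ ε' < D - y0 ∧
      ∀ q : ℝ × ℝ, dist ((x0, y0) : ℝ × ℝ) q ≤ ε' →
        ∃ m : Fin n, q ∈ Rect (a m) (b m) (c m) (d m) ∧
          ((x0, y0) : ℝ × ℝ) ∈ Rect (a m) (b m) (c m) (d m) := by
  classical
  set p : ℝ × ℝ := (x0, y0)
  have hne : ∀ m : Fin n, (Rect (a m) (b m) (c m) (d m)).Nonempty :=
    fun m => ⟨(a m, c m), mem_Rect.2 ⟨le_refl _, (hnd m).1.le, le_refl _, (hnd m).2.le⟩⟩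
  set f : Fin n → ℝ := fun m =>
    if p ∈ Rect (a m) (b m) (c m) (d m) then 1
    else Metric.infDist p (Rect (a m) (b m) (c m) (d m)) with hf
  have hfpos : ∀ m, 0 < f m := by
    intro m
    by_cases hm : p ∈ Rect (a m) (b m) (c m) (d m)
    · simp [hf, hm]
    · simp only [hf, hm, if_false]
      exact ((Rect_closed _ _ _ _).notMem_iff_infDist_pos (hne m)).1 hm
  have huniv : (Finset.univ : Finset (Fin n)).Nonempty := ⟨m0, Finset.mem_univ m0⟩
  set ε : ℝ := Finset.univ.inf' huniv f with hε
  have hεpos : 0 < ε := by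
    rw [hε, Finset.lt_inf'_iff]
    exact fun m _ => hfpos m
  have hnear : ∀ (m : Fin n) (q : ℝ × ℝ), q ∈ Rect (a m) (b m) (c m) (d m) →
      dist p q < ε → p ∈ Rect (a m) (b m) (c m) (d m) := by
    intro m q hq hd
    by_contra hpm
    have h1 : ε ≤ f m := Finset.inf'_le f (Finset.mem_univ m)
    have h2 : f m = Metric.infDist p (Rect (a m) (b m) (c m) (d m)) := by
      simp [hf, hpm]
    have h4 := Metric.infDist_le_dist_of_mem (x := p) hq
    linarith
  refine ⟨min ε (min (x0 - A) (min (B - x0) (min (y0 - C) (D - y0)))) / 2,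
    ?_, ?_, ?_, ?_, ?_, ?_⟩
  · have : 0 < min ε (min (x0 - A) (min (B - x0) (min (y0 - C) (D - y0)))) := by
      simp only [lt_min_iff]
      exact ⟨hεpos, by linarith, by linarith, by linarith, by linarith⟩
    linarith
  · have h1 := (min_le_right ε (min (x0 - A) (min (B - x0) (min (y0 - C) (D - y0))))).trans
      (min_le_left _ _)
    have h0 : 0 < min ε (min (x0 - A) (min (B - x0) (min (y0 - C) (D - y0)))) := by
      simp only [lt_min_iff]
      exact ⟨hεpos, by linarith, by linarith, by linarith, by linarith⟩
    linarith
  · have h1 := (min_le_right ε (min (x0 - A) (min (B - x0) (min (y0 - C) (D - y0))))).trans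
      ((min_le_right _ _).trans (min_le_left _ _))
    have h0 : 0 < min ε (min (x0 - A) (min (B - x0) (min (y0 - C) (D - y0)))) := by
      simp only [lt_min_iff]
      exact ⟨hεpos, by linarith, by linarith, by linarith, by linarith⟩
    linarith
  · have h1 := (min_le_right ε (min (x0 - A) (min (B - x0) (min (y0 - C) (D - y0))))).trans
      ((min_le_right _ _).trans ((min_le_right _ _).trans (min_le_left _ _)))
    have h0 : 0 < min ε (min (x0 - A) (min (B - x0) (min (y0 - C) (D - y0)))) := by
      simp only [lt_min_iff]
      exact ⟨hεpos, by linarith, by linarith, by linarith, by linarith⟩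
    linarith
  · have h1 := (min_le_right ε (min (x0 - A) (min (B - x0) (min (y0 - C) (D - y0))))).trans
      ((min_le_right _ _).trans ((min_le_right _ _).trans (min_le_right _ _)))
    have h0 : 0 < min ε (min (x0 - A) (min (B - x0) (min (y0 - C) (D - y0)))) := by
      simp only [lt_min_iff]
      exact ⟨hεpos, by linarith, by linarith, by linarith, by linarith⟩
    linarith
  · intro q hq
    have h1 := min_le_left ε (min (x0 - A) (min (B - x0) (min (y0 - C) (D - y0))))
    have h0 : 0 < min ε (min (x0 - A) (min (B - x0) (min (y0 - C) (D - y0)))) := by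
      simp only [lt_min_iff]
      refine ⟨hεpos, by linarith, by linarith, by linarith, by linarith⟩
    have hdq : dist p q < ε := by
      refine lt_of_le_of_lt hq ?_
      linarith
    -- q lies in the big rectangle
    have hq1 : |x0 - q.1| ≤ min ε (min (x0 - A) (min (B - x0) (min (y0 - C) (D - y0)))) / 2 := by
      have := le_trans (le_max_left (dist p.1 q.1) (dist p.2 q.2)) (le_of_eq (Prod.dist_eq (x := p) (y := q)).symm)
      rw [Real.dist_eq] at this
      exact le_trans this hq
    have hq2 : |y0 - q.2| ≤ min ε (min (x0 - A) (min (B - x0) (min (y0 - C) (D - y0)))) / 2 := by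
      have := le_trans (le_max_right (dist p.1 q.1) (dist p.2 q.2)) (le_of_eq (Prod.dist_eq (x := p) (y := q)).symm)
      rw [Real.dist_eq] at this
      exact le_trans this hq
    have hq1' := abs_le.1 hq1
    have hq2' := abs_le.1 hq2
    have hbA : min ε (min (x0 - A) (min (B - x0) (min (y0 - C) (D - y0)))) ≤ x0 - A :=
      (min_le_right _ _).trans (min_le_left _ _)
    have hbB : min ε (min (x0 - A) (min (B - x0) (min (y0 - C) (D - y0)))) ≤ B - x0 :=
      (min_le_right _ _).trans ((min_le_right _ _).trans (min_le_left _ _))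
    have hbC : min ε (min (x0 - A) (min (B - x0) (min (y0 - C) (D - y0)))) ≤ y0 - C :=
      (min_le_right _ _).trans ((min_le_right _ _).trans ((min_le_right _ _).trans (min_le_left _ _)))
    have hbD : min ε (min (x0 - A) (min (B - x0) (min (y0 - C) (D - y0)))) ≤ D - y0 :=
      (min_le_right _ _).trans ((min_le_right _ _).trans ((min_le_right _ _).trans (min_le_right _ _)))
    have hqR : q ∈ Rect A B C D := by
      refine mem_Rect.2 ⟨by linarith, by linarith, by linarith, by linarith⟩
    rw [← hcov] at hqR
    obtain ⟨m, hm⟩ := Set.mem_iUnion.1 hqR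
    exact ⟨m, hm, hnear m q hm hdq⟩
lemma eq_of_ncard_le {n : ℕ} {F : Set (Fin n)} (h3 : F.ncard ≤ 3) {j k m1 m2 : Fin n}
    (hj : j ∈ F) (hk : k ∈ F) (h1 : m1 ∈ F) (h2 : m2 ∈ F)
    (hjk : j ≠ k) (hm1j : m1 ≠ j) (hm1k : m1 ≠ k) (hm2j : m2 ≠ j) (hm2k : m2 ≠ k) :
    m1 = m2 := by
  by_contra hne
  have hcard : ({j, k, m1, m2} : Finset (Fin n)).card = 4 := by
    rw [Finset.card_insert_of_notMem (by simp [hjk, hm1j.symm, hm2j.symm]),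
      Finset.card_insert_of_notMem (by simp [hm1k.symm, hm2k.symm]),
      Finset.card_insert_of_notMem (by simp [hne]), Finset.card_singleton]
  have hsub : (({j, k, m1, m2} : Finset (Fin n)) : Set (Fin n)) ⊆ F := by
    intro x hx
    simp only [Finset.coe_insert, Set.mem_insert_iff, Finset.coe_singleton,
      Set.mem_singleton_iff] at hx
    rcases hx with rfl | rfl | rfl | rfl <;> assumption
  have := Set.ncard_le_ncard hsub (Set.toFinite F)
  rw [Set.ncard_coe_finset, hcard] at this
  omega

/-- Two distinct rectangles of an RFP cannot meet in exactly one point: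
core case where `j` is the lower-left one and `k` the upper-right one. -/
lemma core_ll_ur {n : ℕ} {A B C D : ℝ} {a b c d : Fin n → ℝ}
    (hnd : ∀ k, a k < b k ∧ c k < d k)
    (hcov : (⋃ k, Rect (a k) (b k) (c k) (d k)) = Rect A B C D)
    (hdisj : (Set.univ : Set (Fin n)).Pairwise fun i j =>
      Disjoint (Set.Ioo (a i) (b i) ×ˢ Set.Ioo (c i) (d i))
               (Set.Ioo (a j) (b j) ×ˢ Set.Ioo (c j) (d j)))
    (h3 : ∀ p : ℝ × ℝ, {k : Fin n | p ∈ Rect (a k) (b k) (c k) (d k)}.ncard ≤ 3)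
    {j k : Fin n} (hjk : j ≠ k) {x0 y0 : ℝ}
    (hbj : b j = x0) (hak : a k = x0) (hdj : d j = y0) (hck : c k = y0) : False := by
  obtain ⟨hAj, hBj, hCj, hDj⟩ := rect_sub hnd hcov j
  obtain ⟨hAk, hBk, hCk, hDk⟩ := rect_sub hnd hcov k
  obtain ⟨hj1, hj2⟩ := hnd j
  obtain ⟨hk1, hk2⟩ := hnd k
  have hAx : A < x0 := by linarith
  have hxB : x0 < B := by linarith
  have hCy : C < y0 := by linarith
  have hyD : y0 < D := by linarith
  obtain ⟨ε, hε0, hεA, hεB, hεC, hεD, hprobe⟩ := probe j hnd hcov hAx hxB hCy hyD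
  -- probe the lower-right free quadrant
  have hd1 : dist ((x0, y0) : ℝ × ℝ) (x0 + ε, y0 - ε) ≤ ε := by
    have := dist_corner x0 y0 1 (-1) ε (by norm_num) (by norm_num) hε0.le
    simpa [sub_eq_add_neg] using this
  have hd2 : dist ((x0, y0) : ℝ × ℝ) (x0 - ε, y0 + ε) ≤ ε := by
    have := dist_corner x0 y0 (-1) 1 ε (by norm_num) (by norm_num) hε0.le
    simpa [sub_eq_add_neg] using this
  obtain ⟨m1, hm1q, hm1p⟩ := hprobe _ hd1
  obtain ⟨m2, hm2q, hm2p⟩ := hprobe _ hd2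
  rcases mem_Rect.1 hm1q with ⟨hm1a, hm1b, hm1c, hm1d⟩
  rcases mem_Rect.1 hm2q with ⟨hm2a, hm2b, hm2c, hm2d⟩
  simp only at hm1a hm1b hm1c hm1d hm2a hm2b hm2c hm2d
  have hm1j : m1 ≠ j := by
    rintro rfl; linarith
  have hm1k : m1 ≠ k := by
    rintro rfl; linarith
  have hm2j : m2 ≠ j := by
    rintro rfl; linarith
  have hm2k : m2 ≠ k := by
    rintro rfl; linarith
  have hpj : ((x0, y0) : ℝ × ℝ) ∈ Rect (a j) (b j) (c j) (d j) :=
    mem_Rect.2 ⟨by linarith, by linarith, by linarith, by linarith⟩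
  have hpk : ((x0, y0) : ℝ × ℝ) ∈ Rect (a k) (b k) (c k) (d k) :=
    mem_Rect.2 ⟨by linarith, by linarith, by linarith, by linarith⟩
  have hm12 : m1 = m2 :=
    eq_of_ncard_le (h3 ((x0, y0) : ℝ × ℝ)) hpj hpk hm1p hm2p hjk hm1j hm1k hm2j hm2k
  subst hm12
  -- now m1 contains a neighbourhood of (x0,y0); its interior meets the interior of j
  set δ : ℝ := min ε (min (x0 - a j) (y0 - c j)) / 2 with hδ
  have hδ0 : 0 < δ := by
    have : 0 < min ε (min (x0 - a j) (y0 - c j)) := by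
      simp only [lt_min_iff]
      exact ⟨hε0, by linarith, by linarith⟩
    rw [hδ]; linarith
  have hδε : δ < ε := by
    have := min_le_left ε (min (x0 - a j) (y0 - c j))
    rw [hδ]; linarith
  have hδa : δ < x0 - a j := by
    have := (min_le_right ε (min (x0 - a j) (y0 - c j))).trans (min_le_left _ _)
    rw [hδ]; linarith
  have hδc : δ < y0 - c j := by
    have := (min_le_right ε (min (x0 - a j) (y0 - c j))).trans (min_le_right _ _)
    rw [hδ]; linarith
  have hzj : ((x0 - δ, y0 - δ) : ℝ × ℝ) ∈ Set.Ioo (a j) (b j) ×ˢ Set.Ioo (c j) (d j) := by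
    constructor <;> constructor <;> simp only <;> linarith
  have hzm : ((x0 - δ, y0 - δ) : ℝ × ℝ) ∈ Set.Ioo (a m1) (b m1) ×ˢ Set.Ioo (c m1) (d m1) := by
    constructor <;> constructor <;> simp only <;> linarith
  exact Set.disjoint_left.1
    (hdisj (Set.mem_univ j) (Set.mem_univ m1) (Ne.symm hm1j)) hzj hzm

/-- Core case where `j` is the upper-left one and `k` the lower-right one. -/
lemma core_ul_lr {n : ℕ} {A B C D : ℝ} {a b c d : Fin n → ℝ}
    (hnd : ∀ k, a k < b k ∧ c k < d k)
    (hcov : (⋃ k, Rect (a k) (b k) (c k) (d k)) = Rect A B C D)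
    (hdisj : (Set.univ : Set (Fin n)).Pairwise fun i j =>
      Disjoint (Set.Ioo (a i) (b i) ×ˢ Set.Ioo (c i) (d i))
               (Set.Ioo (a j) (b j) ×ˢ Set.Ioo (c j) (d j)))
    (h3 : ∀ p : ℝ × ℝ, {k : Fin n | p ∈ Rect (a k) (b k) (c k) (d k)}.ncard ≤ 3)
    {j k : Fin n} (hjk : j ≠ k) {x0 y0 : ℝ}
    (hbj : b j = x0) (hak : a k = x0) (hcj : c j = y0) (hdk : d k = y0) : False := by
  obtain ⟨hAj, hBj, hCj, hDj⟩ := rect_sub hnd hcov j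
  obtain ⟨hAk, hBk, hCk, hDk⟩ := rect_sub hnd hcov k
  obtain ⟨hj1, hj2⟩ := hnd j
  obtain ⟨hk1, hk2⟩ := hnd k
  have hAx : A < x0 := by linarith
  have hxB : x0 < B := by linarith
  have hCy : C < y0 := by linarith
  have hyD : y0 < D := by linarith
  obtain ⟨ε, hε0, hεA, hεB, hεC, hεD, hprobe⟩ := probe j hnd hcov hAx hxB hCy hyD
  -- probe the lower-left and upper-right free quadrants
  have hd1 : dist ((x0, y0) : ℝ × ℝ) (x0 - ε, y0 - ε) ≤ ε := by
    have := dist_corner x0 y0 (-1) (-1) ε (by norm_num) (by norm_num) hε0.le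
    simpa [sub_eq_add_neg] using this
  have hd2 : dist ((x0, y0) : ℝ × ℝ) (x0 + ε, y0 + ε) ≤ ε := by
    have := dist_corner x0 y0 1 1 ε (by norm_num) (by norm_num) hε0.le
    simpa using this
  obtain ⟨m1, hm1q, hm1p⟩ := hprobe _ hd1
  obtain ⟨m2, hm2q, hm2p⟩ := hprobe _ hd2
  rcases mem_Rect.1 hm1q with ⟨hm1a, hm1b, hm1c, hm1d⟩
  rcases mem_Rect.1 hm2q with ⟨hm2a, hm2b, hm2c, hm2d⟩
  simp only at hm1a hm1b hm1c hm1d hm2a hm2b hm2c hm2d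
  have hm1j : m1 ≠ j := by
    rintro rfl; linarith
  have hm1k : m1 ≠ k := by
    rintro rfl; linarith
  have hm2j : m2 ≠ j := by
    rintro rfl; linarith
  have hm2k : m2 ≠ k := by
    rintro rfl; linarith
  have hpj : ((x0, y0) : ℝ × ℝ) ∈ Rect (a j) (b j) (c j) (d j) :=
    mem_Rect.2 ⟨by linarith, by linarith, by linarith, by linarith⟩
  have hpk : ((x0, y0) : ℝ × ℝ) ∈ Rect (a k) (b k) (c k) (d k) :=
    mem_Rect.2 ⟨by linarith, by linarith, by linarith, by linarith⟩
  have hm12 : m1 = m2 :=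
    eq_of_ncard_le (h3 ((x0, y0) : ℝ × ℝ)) hpj hpk hm1p hm2p hjk hm1j hm1k hm2j hm2k
  subst hm12
  set δ : ℝ := min ε (min (x0 - a j) (d j - y0)) / 2 with hδ
  have hδ0 : 0 < δ := by
    have : 0 < min ε (min (x0 - a j) (d j - y0)) := by
      simp only [lt_min_iff]
      exact ⟨hε0, by linarith, by linarith⟩
    rw [hδ]; linarith
  have hδε : δ < ε := by
    have := min_le_left ε (min (x0 - a j) (d j - y0))
    rw [hδ]; linarith
  have hδa : δ < x0 - a j := by
    have := (min_le_right ε (min (x0 - a j) (d j - y0))).trans (min_le_left _ _)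
    rw [hδ]; linarith
  have hδd : δ < d j - y0 := by
    have := (min_le_right ε (min (x0 - a j) (d j - y0))).trans (min_le_right _ _)
    rw [hδ]; linarith
  have hzj : ((x0 - δ, y0 + δ) : ℝ × ℝ) ∈ Set.Ioo (a j) (b j) ×ˢ Set.Ioo (c j) (d j) := by
    constructor <;> constructor <;> simp only <;> linarith
  have hzm : ((x0 - δ, y0 + δ) : ℝ × ℝ) ∈ Set.Ioo (a m1) (b m1) ×ˢ Set.Ioo (c m1) (d m1) := by
    constructor <;> constructor <;> simp only <;> linarith
  exact Set.disjoint_left.1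
    (hdisj (Set.mem_univ j) (Set.mem_univ m1) (Ne.symm hm1j)) hzj hzm
/-- In an RFP, two distinct rectangles that intersect do so in more than one point. -/
lemma inter_nontrivial {n : ℕ} {A B C D : ℝ} {a b c d : Fin n → ℝ}
    (hnd : ∀ k, a k < b k ∧ c k < d k)
    (hcov : (⋃ k, Rect (a k) (b k) (c k) (d k)) = Rect A B C D)
    (hdisj : (Set.univ : Set (Fin n)).Pairwise fun i j =>
      Disjoint (Set.Ioo (a i) (b i) ×ˢ Set.Ioo (c i) (d i))
               (Set.Ioo (a j) (b j) ×ˢ Set.Ioo (c j) (d j)))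
    (h3 : ∀ p : ℝ × ℝ, {k : Fin n | p ∈ Rect (a k) (b k) (c k) (d k)}.ncard ≤ 3)
    {j k : Fin n} (hjk : j ≠ k) {p : ℝ × ℝ}
    (hpj : p ∈ Rect (a j) (b j) (c j) (d j)) (hpk : p ∈ Rect (a k) (b k) (c k) (d k)) :
    (Rect (a j) (b j) (c j) (d j) ∩ Rect (a k) (b k) (c k) (d k)).Nontrivial := by
  rcases mem_Rect.1 hpj with ⟨hja, hjb, hjc, hjd⟩
  rcases mem_Rect.1 hpk with ⟨hka, hkb, hkc, hkd⟩
  have hx12 : max (a j) (a k) ≤ min (b j) (b k) :=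
    le_trans (max_le hja hka) (le_min hjb hkb)
  have hy12 : max (c j) (c k) ≤ min (d j) (d k) :=
    le_trans (max_le hjc hkc) (le_min hjd hkd)
  rcases hx12.lt_or_eq with hxlt | hxeq
  · -- horizontal overlap is nondegenerate
    refine ⟨(max (a j) (a k), p.2), ⟨?_, ?_⟩, (min (b j) (b k), p.2), ⟨?_, ?_⟩, ?_⟩
    · exact mem_Rect.2 ⟨le_max_left _ _, by
        calc max (a j) (a k) ≤ min (b j) (b k) := hx12
        _ ≤ b j := min_le_left _ _, hjc, hjd⟩
    · exact mem_Rect.2 ⟨le_max_right _ _, by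
        calc max (a j) (a k) ≤ min (b j) (b k) := hx12
        _ ≤ b k := min_le_right _ _, hkc, hkd⟩
    · exact mem_Rect.2 ⟨le_trans (le_max_left _ _) hx12, min_le_left _ _, hjc, hjd⟩
    · exact mem_Rect.2 ⟨le_trans (le_max_right _ _) hx12, min_le_right _ _, hkc, hkd⟩
    · simp only [ne_eq, Prod.mk.injEq, not_and]
      intro hcon
      exact absurd hcon hxlt.ne
  rcases hy12.lt_or_eq with hylt | hyeq
  · refine ⟨(p.1, max (c j) (c k)), ⟨?_, ?_⟩, (p.1, min (d j) (d k)), ⟨?_, ?_⟩, ?_⟩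
    · exact mem_Rect.2 ⟨hja, hjb, le_max_left _ _, le_trans hy12 (min_le_left _ _)⟩
    · exact mem_Rect.2 ⟨hka, hkb, le_max_right _ _, le_trans hy12 (min_le_right _ _)⟩
    · exact mem_Rect.2 ⟨hja, hjb, le_trans (le_max_left _ _) hy12, min_le_left _ _⟩
    · exact mem_Rect.2 ⟨hka, hkb, le_trans (le_max_right _ _) hy12, min_le_right _ _⟩
    · simp only [ne_eq, Prod.mk.injEq, not_and]
      intro _ hcon
      exact absurd hcon hylt.ne
  · -- degenerate in both directions: single-point touching, impossible
    exfalso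
    set x0 := min (b j) (b k) with hx0
    set y0 := min (d j) (d k) with hy0
    rcases max_choice (a j) (a k) with haj | hak'
    · -- a j = x0 : j is on the right
      have hj_right : a j = x0 := by rw [← hxeq, haj]
      have hk_left : b k = x0 := by
        rcases min_choice (b j) (b k) with hbj | hbk
        · exfalso; have : a j = b j := by rw [hj_right, hx0, hbj]
          exact absurd this (hnd j).1.ne
        · rw [hx0, hbk]
      rcases max_choice (c j) (c k) with hcj | hck'
      · -- c j = y0 : j on top, k at bottom: k is lower-left, j upper-right
        have hj_top : c j = y0 := by rw [← hyeq, hcj]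
        have hk_bot : d k = y0 := by
          rcases min_choice (d j) (d k) with hdj | hdk
          · exfalso; have : c j = d j := by rw [hj_top, hy0, hdj]
            exact absurd this (hnd j).2.ne
          · rw [hy0, hdk]
        exact core_ll_ur hnd hcov hdisj h3 hjk.symm hk_left hj_right hk_bot hj_top
      · -- c k = y0 : k on top: j is lower-right... j right & k top: k upper-left? no:
        -- k is left (b k = x0) and top (c k = y0): k upper-left, j lower-right
        have hk_top : c k = y0 := by rw [← hyeq, hck']
        have hj_bot : d j = y0 := by
          rcases min_choice (d j) (d k) with hdj | hdk
          · rw [hy0, hdj]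
          · exfalso; have : c k = d k := by rw [hk_top, hy0, hdk]
            exact absurd this (hnd k).2.ne
        exact core_ul_lr hnd hcov hdisj h3 hjk.symm hk_left hj_right hk_top hj_bot
    · -- a k = x0 : k on the right, j on the left
      have hk_right : a k = x0 := by rw [← hxeq, hak']
      have hj_left : b j = x0 := by
        rcases min_choice (b j) (b k) with hbj | hbk
        · rw [hx0, hbj]
        · exfalso; have : a k = b k := by rw [hk_right, hx0, hbk]
          exact absurd this (hnd k).1.ne
      rcases max_choice (c j) (c k) with hcj | hck'
      · -- c j = y0 : j on top: j upper-left, k lower-right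
        have hj_top : c j = y0 := by rw [← hyeq, hcj]
        have hk_bot : d k = y0 := by
          rcases min_choice (d j) (d k) with hdj | hdk
          · exfalso; have : c j = d j := by rw [hj_top, hy0, hdj]
            exact absurd this (hnd j).2.ne
          · rw [hy0, hdk]
        exact core_ul_lr hnd hcov hdisj h3 hjk hj_left hk_right hj_top hk_bot
      · -- c k = y0 : k on top: j lower-left, k upper-right
        have hk_top : c k = y0 := by rw [← hyeq, hck']
        have hj_bot : d j = y0 := by
          rcases min_choice (d j) (d k) with hdj | hdk
          · rw [hy0, hdj]
          · exfalso; have : c k = d k := by rw [hk_top, hy0, hdk]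
            exact absurd this (hnd k).2.ne
        exact core_ll_ur hnd hcov hdisj h3 hjk hj_left hk_right hj_bot hk_top

lemma compl_rect_pathConnected {A B C D aa bb cc dd : ℝ}
    (hA : A ≤ aa) (hB : bb ≤ B) (hC : C ≤ cc) (hD : dd ≤ D)
    (hab : aa < bb) (hcd : cc < dd)
    (hx : A < aa ∨ bb < B) (hy : C < cc ∨ dd < D) :
    IsPathConnected (Rect A B C D \ Rect aa bb cc dd) := by
  set qx : ℝ := if bb < B then B else A with hqxdef
  set qy : ℝ := if dd < D then D else C with hqydef
  have hqx : qx < aa ∨ bb < qx := by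
    by_cases hbB : bb < B
    · right; simp [hqxdef, hbB]
    · left
      have : A < aa := hx.resolve_right hbB
      simp [hqxdef, hbB, this]
  have hqxR : A ≤ qx ∧ qx ≤ B := by
    by_cases hbB : bb < B <;> simp only [hqxdef, hbB, if_true, if_false] <;>
      refine ⟨by linarith, by linarith⟩
  have hqy : qy < cc ∨ dd < qy := by
    by_cases hdD : dd < D
    · right; simp [hqydef, hdD]
    · left
      have : C < cc := hy.resolve_right hdD
      simp [hqydef, hdD, this]
  have hqyR : C ≤ qy ∧ qy ≤ D := by
    by_cases hdD : dd < D <;> simp only [hqydef, hdD, if_true, if_false] <;>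
      refine ⟨by linarith, by linarith⟩
  have hqmem : (qx, qy) ∈ Rect A B C D \ Rect aa bb cc dd := by
    constructor
    · exact mem_Rect.2 ⟨hqxR.1, hqxR.2, hqyR.1, hqyR.2⟩
    · intro hmem
      rcases mem_Rect.1 hmem with ⟨h1, h2, h3, h4⟩
      rcases hqx with h | h <;> linarith
  refine ⟨(qx, qy), hqmem, ?_⟩
  rintro ⟨p1, p2⟩ hp
  obtain ⟨hpR, hpN⟩ := hp
  rcases mem_Rect.1 hpR with ⟨hp1, hp2, hp3, hp4⟩
  have hesc : (p1 < aa ∨ bb < p1) ∨ (p2 < cc ∨ dd < p2) := by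
    by_contra hcon
    push_neg at hcon
    exact hpN (mem_Rect.2 ⟨hcon.1.1, hcon.1.2, hcon.2.1, hcon.2.2⟩)
  rcases hesc with hescx | hescy
  · -- go vertically from p to (p1, qy), then horizontally to (qx, qy)
    have j1 : JoinedIn (Rect A B C D \ Rect aa bb cc dd) (p1, p2) (p1, qy) := by
      apply segment_vert
      intro y hy1 hy2
      constructor
      · refine mem_Rect.2 ⟨hp1, hp2, ?_, ?_⟩
        · rcases le_total p2 qy with hh | hh
          · rw [min_eq_left hh] at hy1; linarith [hqyR.1]
          · rw [min_eq_right hh] at hy1; linarith [hqyR.1]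
        · rcases le_total p2 qy with hh | hh
          · rw [max_eq_right hh] at hy2; linarith [hqyR.2]
          · rw [max_eq_left hh] at hy2; linarith [hqyR.2]
      · intro hmem
        rcases mem_Rect.1 hmem with ⟨h1, h2, _, _⟩
        rcases hescx with h | h <;> simp_all <;> linarith
    have j2 : JoinedIn (Rect A B C D \ Rect aa bb cc dd) (p1, qy) (qx, qy) := by
      apply segment_horiz
      intro x hx1 hx2
      constructor
      · refine mem_Rect.2 ⟨?_, ?_, hqyR.1, hqyR.2⟩
        · rcases le_total p1 qx with hh | hh
          · rw [min_eq_left hh] at hx1; linarith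
          · rw [min_eq_right hh] at hx1; linarith [hqxR.1]
        · rcases le_total p1 qx with hh | hh
          · rw [max_eq_right hh] at hx2; linarith [hqxR.2]
          · rw [max_eq_left hh] at hx2; linarith
      · intro hmem
        rcases mem_Rect.1 hmem with ⟨_, _, h3, h4⟩
        rcases hqy with h | h <;> simp_all <;> linarith
    exact (j1.trans j2).symm
  · -- go horizontally from p to (qx, p2), then vertically to (qx, qy)
    have j1 : JoinedIn (Rect A B C D \ Rect aa bb cc dd) (p1, p2) (qx, p2) := by
      apply segment_horiz
      intro x hx1 hx2
      constructor
      · refine mem_Rect.2 ⟨?_, ?_, hp3, hp4⟩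
        · rcases le_total p1 qx with hh | hh
          · rw [min_eq_left hh] at hx1; linarith
          · rw [min_eq_right hh] at hx1; linarith [hqxR.1]
        · rcases le_total p1 qx with hh | hh
          · rw [max_eq_right hh] at hx2; linarith [hqxR.2]
          · rw [max_eq_left hh] at hx2; linarith
      · intro hmem
        rcases mem_Rect.1 hmem with ⟨_, _, h3, h4⟩
        rcases hescy with h | h <;> simp_all <;> linarith
    have j2 : JoinedIn (Rect A B C D \ Rect aa bb cc dd) (qx, p2) (qx, qy) := by
      apply segment_vert
      intro y hy1 hy2
      constructor
      · refine mem_Rect.2 ⟨hqxR.1, hqxR.2, ?_, ?_⟩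
        · rcases le_total p2 qy with hh | hh
          · rw [min_eq_left hh] at hy1; linarith
          · rw [min_eq_right hh] at hy1; linarith [hqyR.1]
        · rcases le_total p2 qy with hh | hh
          · rw [max_eq_right hh] at hy2; linarith [hqyR.2]
          · rw [max_eq_left hh] at hy2; linarith
      · intro hmem
        rcases mem_Rect.1 hmem with ⟨h1, h2, _, _⟩
        rcases hqx with h | h <;> simp_all <;> linarith
    exact (j1.trans j2).symm

/-- A cut vertex of the adjacency graph of a rectangular floorplan corresponds
to a through rectangle: it spans the full width or the full height. -/
theorem stmt_7 {n : ℕ} (hn : 3 ≤ n) (A B C D : ℝ) (a b c d : Fin n → ℝ)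
    (h : IsRFP A B C D a b c d) (i : Fin n)
    (hconn : (adjGraph a b c d).Connected)
    (hcut : ¬ ((adjGraph a b c d).induce ({i}ᶜ : Set (Fin n))).Connected) :
    (a i = A ∧ b i = B) ∨ (c i = C ∧ d i = D) := by
  classical
  obtain ⟨hAB, hCD, hnd, hcov, hdisj, h3⟩ := h
  by_contra hgoal
  push_neg at hgoal
  obtain ⟨hg1, hg2⟩ := hgoal
  obtain ⟨hAi, hBi, hCi, hDi⟩ := rect_sub hnd hcov i
  have hx : A < a i ∨ b i < B := by
    rcases hAi.lt_or_eq with hh | hh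
    · exact Or.inl hh
    · exact Or.inr (hBi.lt_of_ne (hg1 hh.symm))
  have hy : C < c i ∨ d i < D := by
    rcases hCi.lt_or_eq with hh | hh
    · exact Or.inl hh
    · exact Or.inr (hDi.lt_of_ne (hg2 hh.symm))
  have hpath := compl_rect_pathConnected hAi hBi hCi hDi (hnd i).1 (hnd i).2 hx hy
  have hconnset : IsConnected (Rect A B C D \ Rect (a i) (b i) (c i) (d i)) :=
    hpath.isConnected
  set S : Set (ℝ × ℝ) := ⋃ j ∈ ({i}ᶜ : Set (Fin n)), Rect (a j) (b j) (c j) (d j) with hS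
  have hsub1 : Rect A B C D \ Rect (a i) (b i) (c i) (d i) ⊆ S := by
    rintro z ⟨hz1, hz2⟩
    rw [← hcov] at hz1
    obtain ⟨k, hk⟩ := Set.mem_iUnion.1 hz1
    have hki : k ∈ ({i}ᶜ : Set (Fin n)) := by
      rw [Set.mem_compl_singleton_iff]
      rintro rfl
      exact hz2 hk
    exact Set.mem_biUnion hki hk
  have hsub2 : S ⊆ closure (Rect A B C D \ Rect (a i) (b i) (c i) (d i)) := by
    refine Set.iUnion₂_subset ?_
    intro j hj
    have hji : j ≠ i := Set.mem_compl_singleton_iff.1 hj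
    have hint : Set.Ioo (a j) (b j) ×ˢ Set.Ioo (c j) (d j) ⊆
        Rect A B C D \ Rect (a i) (b i) (c i) (d i) := by
      intro z hz
      have hzj : z ∈ Rect (a j) (b j) (c j) (d j) := by
        refine mem_Rect.2 ⟨hz.1.1.le, hz.1.2.le, hz.2.1.le, hz.2.2.le⟩
      constructor
      · rw [← hcov]; exact Set.mem_iUnion.2 ⟨j, hzj⟩
      · intro hzi
        have hcl : Rect (a i) (b i) (c i) (d i) =
            closure (Set.Ioo (a i) (b i) ×ˢ Set.Ioo (c i) (d i)) := by
          rw [closure_prod_eq, closure_Ioo (hnd i).1.ne, closure_Ioo (hnd i).2.ne]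
          rfl
        rw [hcl] at hzi
        obtain ⟨w, hw1, hw2⟩ := mem_closure_iff.1 hzi _ (isOpen_Ioo.prod isOpen_Ioo) hz
        exact Set.disjoint_left.1
          (hdisj (Set.mem_univ j) (Set.mem_univ i) hji) hw1 hw2
    have hclj : Rect (a j) (b j) (c j) (d j) =
        closure (Set.Ioo (a j) (b j) ×ˢ Set.Ioo (c j) (d j)) := by
      rw [closure_prod_eq, closure_Ioo (hnd j).1.ne, closure_Ioo (hnd j).2.ne]
      rfl
    rw [hclj]
    exact closure_mono hint
  have hSpre : IsPreconnected S :=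
    hconnset.isPreconnected.subset_closure hsub1 hsub2
  -- now the graph argument
  have hnonempty : Nonempty ({i}ᶜ : Set (Fin n)) := by
    by_cases hi0 : i = ⟨0, by omega⟩
    · refine ⟨⟨⟨1, by omega⟩, ?_⟩⟩
      rw [Set.mem_compl_singleton_iff, hi0]
      intro hc
      simpa using congrArg Fin.val hc
    · refine ⟨⟨⟨0, by omega⟩, ?_⟩⟩
      rw [Set.mem_compl_singleton_iff]
      exact fun hc => hi0 hc.symm
  have hnp : ¬ ((adjGraph a b c d).induce ({i}ᶜ : Set (Fin n))).Preconnected := by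
    intro hp
    exact hcut ((SimpleGraph.connected_iff _).2 ⟨hp, hnonempty⟩)
  obtain ⟨u, v, huv⟩ : ∃ u v : ({i}ᶜ : Set (Fin n)),
      ¬ ((adjGraph a b c d).induce ({i}ᶜ : Set (Fin n))).Reachable u v := by
    by_contra hc
    push_neg at hc
    exact hnp fun u v => hc u v
  set P : Set (Fin n) := {m | ∃ hm : m ∈ ({i}ᶜ : Set (Fin n)),
    ((adjGraph a b c d).induce ({i}ᶜ : Set (Fin n))).Reachable u ⟨m, hm⟩} with hP
  set Q : Set (Fin n) := {m | m ∈ ({i}ᶜ : Set (Fin n)) ∧ m ∉ P} with hQ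
  set U : Set (ℝ × ℝ) := ⋃ m ∈ P, Rect (a m) (b m) (c m) (d m) with hU
  set V : Set (ℝ × ℝ) := ⋃ m ∈ Q, Rect (a m) (b m) (c m) (d m) with hV
  have hUclosed : IsClosed U :=
    Set.Finite.isClosed_biUnion (Set.toFinite P) (fun m _ => Rect_closed _ _ _ _)
  have hVclosed : IsClosed V :=
    Set.Finite.isClosed_biUnion (Set.toFinite Q) (fun m _ => Rect_closed _ _ _ _)
  have hcover : S ⊆ U ∪ V := by
    refine Set.iUnion₂_subset ?_
    intro j hj z hz
    by_cases hjP : j ∈ P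
    · exact Or.inl (Set.mem_biUnion hjP hz)
    · exact Or.inr (Set.mem_biUnion ⟨hj, hjP⟩ hz)
  have hmemRect : ∀ m : Fin n, ((a m, c m) : ℝ × ℝ) ∈ Rect (a m) (b m) (c m) (d m) :=
    fun m => mem_Rect.2 ⟨le_refl _, (hnd m).1.le, le_refl _, (hnd m).2.le⟩
  have huP : (u : Fin n) ∈ P := ⟨u.2, by exact SimpleGraph.Reachable.refl _⟩
  have hvQ : (v : Fin n) ∈ Q := by
    refine ⟨v.2, ?_⟩
    rintro ⟨hm, hr⟩
    exact huv (by convert hr using 2)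
  have hSU : (S ∩ U).Nonempty :=
    ⟨(a u.1, c u.1), Set.mem_biUnion u.2 (hmemRect u.1), Set.mem_biUnion huP (hmemRect u.1)⟩
  have hSV : (S ∩ V).Nonempty :=
    ⟨(a v.1, c v.1), Set.mem_biUnion v.2 (hmemRect v.1), Set.mem_biUnion hvQ (hmemRect v.1)⟩
  obtain ⟨z, hzS, hzU, hzV⟩ :=
    isPreconnected_closed_iff.1 hSpre U V hUclosed hVclosed hcover hSU hSV
  obtain ⟨j', hj'P, hzj'⟩ := Set.mem_iUnion₂.1 hzU
  obtain ⟨k', hk'Q, hzk'⟩ := Set.mem_iUnion₂.1 hzV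
  have hj'k' : j' ≠ k' := by
    rintro rfl
    exact hk'Q.2 hj'P
  have hadj : (adjGraph a b c d).Adj j' k' := by
    rw [adjGraph, SimpleGraph.fromRel_adj]
    exact ⟨hj'k', Or.inl (inter_nontrivial hnd hcov hdisj h3 hj'k' hzj' hzk')⟩
  obtain ⟨hmj, hrj⟩ := hj'P
  have hadj' : ((adjGraph a b c d).induce ({i}ᶜ : Set (Fin n))).Adj ⟨j', hmj⟩ ⟨k', hk'Q.1⟩ :=
    hadj
  exact hk'Q.2 ⟨hk'Q.1, hrj.trans hadj'.reachable⟩
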